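/- Let D = ℂ \ K be a co-compact domain with K compact and nonempty, and let (D_j) be an exhaustion of D. Suppose x_j ∈ ℂ \ D_j for every j and x_j → x_0 in ℂ. Then x_0 ∈ ℂ \ D, and for every index k there exists J such that for all j ≥ J, the connected component of ℂ \ D_j containing x_j is contained in the connected component of ℂ \ D_k containing x_0. -/

import Mathlib

open Set Metric Filter MeasureTheory

/-- A Jordan curve: the image of an injective continuous map of the unit circle into `ℂ`. -/
def IsJordanCurve (J : Set ℂ) : Prop :=
  ∃ f : ℂ → ℂ, ContinuousOn f (sphere (0 : ℂ) 1) ∧ Set.InjOn f (sphere (0 : ℂ) 1) ∧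
    J = f '' sphere (0 : ℂ) 1

/-- `R` is the closed Jordan region bounded by the Jordan curve `J`: the union of `J`
and the bounded connected component of its complement. -/
def IsClosedJordanRegionOf (R J : Set ℂ) : Prop :=
  IsJordanCurve J ∧ ∃ x ∈ Jᶜ, Bornology.IsBounded (connectedComponentIn Jᶜ x) ∧
    R = J ∪ connectedComponentIn Jᶜ x

/-- `p` is a connected component of the set `S ⊆ ℂ`. -/
def IsCompOf (p S : Set ℂ) : Prop := ∃ x ∈ S, p = connectedComponentIn S x

/-- A co-compact domain: a nonempty connected open subset of `ℂ` whose complement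
(`K` in the notation `D = ℂ \ K`) is compact. -/
def IsCoCompactDomain (D : Set ℂ) : Prop := IsOpen D ∧ IsConnected D ∧ IsCompact Dᶜ

/-- `D` is countably connected: it has countably many complementary components. -/
def CountablyConnected (D : Set ℂ) : Prop := {p : Set ℂ | IsCompOf p Dᶜ}.Countable

/-- An exhaustion of `D`: an increasing sequence of nonempty open connected sets with
union `D`, such that each complement `ℂ \ Dseq j` is a nonempty finite union of pairwise
disjoint closed Jordan regions whose boundary Jordan curves are contained in `D`. -/
def IsExhaustion (D : Set ℂ) (Dseq : ℕ → Set ℂ) : Prop :=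
  (∀ j, IsOpen (Dseq j)) ∧ (∀ j, IsConnected (Dseq j)) ∧
  (∀ j, Dseq j ⊆ Dseq (j + 1)) ∧ (⋃ j, Dseq j) = D ∧
  ∀ j, ∃ (n : ℕ) (Reg Cur : Fin (n + 1) → Set ℂ),
    (∀ i, IsClosedJordanRegionOf (Reg i) (Cur i)) ∧
    (∀ i, Cur i ⊆ D) ∧
    (Pairwise fun i k => Disjoint (Reg i) (Reg k)) ∧
    (Dseq j)ᶜ = ⋃ i, Reg i

/-- The exhaustion `Dseq` of `D` is a refinement of the exhaustion `Dseq'` of `D`: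
every connected component `p` of `ℂ \ Dseq j` is a connected component of
`ℂ \ Dseq' k` for some `k ≥ j`. -/
def IsRefinementOf (D : Set ℂ) (Dseq Dseq' : ℕ → Set ℂ) : Prop :=
  IsExhaustion D Dseq ∧
  ∀ j p, IsCompOf p (Dseq j)ᶜ → ∃ k, j ≤ k ∧ IsCompOf p (Dseq' k)ᶜ

/-- A circle domain: a co-compact domain each of whose complementary components is a
single point or a closed disk of positive radius. -/
def IsCircleDomain (G : Set ℂ) : Prop :=
  IsCoCompactDomain G ∧
  ∀ p, IsCompOf p Gᶜ → (∃ x, p = {x}) ∨ ∃ x r, 0 < r ∧ p = closedBall x r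

/-- A conformal map on `U`: an injective holomorphic function. -/
def IsConformalOn (f : ℂ → ℂ) (U : Set ℂ) : Prop :=
  DifferentiableOn ℂ f U ∧ Set.InjOn f U

/-- `f` fixes infinity on `U`: `|f z| → ∞` as `|z| → ∞` within `U`. -/
def FixesInfinity (f : ℂ → ℂ) (U : Set ℂ) : Prop :=
  Tendsto (fun z => ‖f z‖)
    (Filter.comap (fun z : ℂ => ‖z‖) atTop ⊓ 𝓟 U) atTop

lemma jordan_region_compact_connected {R J : Set ℂ} (h : IsClosedJordanRegionOf R J) :
    IsCompact R ∧ IsConnected R := by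
  obtain ⟨⟨f, hfc, hfi, hJ⟩, x₁, hx₁, hbd, hR⟩ := h
  have hJcomp : IsCompact J := hJ ▸ (isCompact_sphere 0 1).image_of_continuousOn hfc
  have hJconn : IsConnected J := by
    rw [hJ]
    exact (isConnected_sphere (by rw [Complex.rank_real_complex]; norm_num) (0 : ℂ)
      zero_le_one).image f hfc
  set U := connectedComponentIn Jᶜ x₁ with hU
  have hUo : IsOpen U := hJcomp.isClosed.isOpen_compl.connectedComponentIn
  have hUconn : IsConnected U := isConnected_connectedComponentIn_iff.mpr hx₁
  have hsub : closure U \ U ⊆ J := by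
    rintro z ⟨hzc, hzU⟩
    by_contra hzJ
    have hzJ' : z ∈ Jᶜ := hzJ
    have hVo : IsOpen (connectedComponentIn Jᶜ z) :=
      hJcomp.isClosed.isOpen_compl.connectedComponentIn
    obtain ⟨w, hwV, hwU⟩ := _root_.mem_closure_iff.mp hzc _ hVo (mem_connectedComponentIn hzJ')
    have h1 : connectedComponentIn Jᶜ z = connectedComponentIn Jᶜ w := connectedComponentIn_eq hwV
    have h2 : connectedComponentIn Jᶜ x₁ = connectedComponentIn Jᶜ w := connectedComponentIn_eq hwU
    have : connectedComponentIn Jᶜ z = U := by rw [hU, h1, h2]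
    exact hzU (this ▸ mem_connectedComponentIn hzJ')
  have hclU : closure U ⊆ J ∪ U := fun z hz => by
    by_cases h : z ∈ U
    · exact Or.inr h
    · exact Or.inl (hsub ⟨hz, h⟩)
  have hRclosed : IsClosed R := by
    rw [← closure_subset_iff_isClosed, hR, closure_union, hJcomp.isClosed.closure_eq]
    intro z hz
    rcases hz with h | h
    · exact Or.inl h
    · rcases hclU h with h' | h'
      · exact Or.inl h'
      · exact Or.inr h'
  have hRbd : Bornology.IsBounded R := hR ▸ hJcomp.isBounded.union hbd
  refine ⟨Metric.isCompact_of_isClosed_isBounded hRclosed hRbd, ?_⟩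
  have hfr : (frontier U).Nonempty := by
    rw [nonempty_frontier_iff]
    refine ⟨⟨x₁, mem_connectedComponentIn hx₁⟩, fun h => ?_⟩
    exact NormedSpace.unbounded_univ ℝ ℂ (h ▸ hbd)
  obtain ⟨z₀, hz₀⟩ := hfr
  rw [frontier, hUo.interior_eq] at hz₀
  have hz₀J : z₀ ∈ J := hsub hz₀
  have hconn : IsConnected (J ∪ closure U) :=
    hJconn.union ⟨z₀, hz₀J, hz₀.1⟩ hUconn.closure
  have : J ∪ closure U = R := by
    rw [hR]
    apply Subset.antisymm
    · rintro z (h | h)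
      · exact Or.inl h
      · exact hclU h
    · exact union_subset_union_right J subset_closure
  exact this ▸ hconn

/-- If `x j ∈ ℂ \ Dseq j` and `x j → x₀`, then `x₀ ∈ ℂ \ D` and the
complementary component of `x j` is eventually contained in the complementary component
of `x₀` at any fixed stage `k` of the exhaustion. -/
theorem limit_point_component_absorption
    (D : Set ℂ) (hD : IsCoCompactDomain D) (hK : Dᶜ.Nonempty)
    (Dseq : ℕ → Set ℂ) (hex : IsExhaustion D Dseq)
    (x : ℕ → ℂ) (hx : ∀ j, x j ∈ (Dseq j)ᶜ)
    (x₀ : ℂ) (hlim : Tendsto x atTop (nhds x₀)) :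
    x₀ ∈ Dᶜ ∧ ∀ k, ∃ J, ∀ j, J ≤ j →
      connectedComponentIn (Dseq j)ᶜ (x j) ⊆ connectedComponentIn (Dseq k)ᶜ x₀ := by
  obtain ⟨hop, hcn, hmono, hunion, hreg⟩ := hex
  have hM : Monotone Dseq := monotone_nat_of_le_succ hmono
  have hx0 : x₀ ∈ Dᶜ := by
    intro hx₀D
    rw [← hunion] at hx₀D
    obtain ⟨m, hm⟩ := mem_iUnion.mp hx₀D
    have := (hlim.eventually ((hop m).mem_nhds hm)).and (eventually_ge_atTop m)
    obtain ⟨j, hj1, hj2⟩ := this.exists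
    exact hx j (hM hj2 hj1)
  refine ⟨hx0, fun k => ?_⟩
  obtain ⟨n, Reg, Cur, hRJ, hCurD, hdisj, hcomp⟩ := hreg k
  have hRegC : ∀ i, IsCompact (Reg i) ∧ IsConnected (Reg i) :=
    fun i => jordan_region_compact_connected (hRJ i)
  have hDk : ∀ j, k ≤ j → (Dseq j)ᶜ ⊆ (Dseq k)ᶜ := fun j hj => compl_subset_compl.mpr (hM hj)
  have hDkD : Dᶜ ⊆ (Dseq k)ᶜ := compl_subset_compl.mpr (hunion ▸ subset_iUnion Dseq k)
  have hx0k : x₀ ∈ ⋃ i, Reg i := hcomp ▸ hDkD hx0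
  obtain ⟨i₀, hx0i⟩ := mem_iUnion.mp hx0k
  set W := ⋃ i ∈ {i : Fin (n + 1) | i ≠ i₀}, Reg i with hW
  have hWc : IsClosed W := Set.Finite.isClosed_biUnion (Set.toFinite _)
    (fun i _ => (hRegC i).1.isClosed)
  have hx0W : x₀ ∈ Wᶜ := by
    intro hmem
    obtain ⟨i, hi, hmem⟩ := mem_iUnion₂.mp hmem
    exact Set.disjoint_left.mp (hdisj hi) hmem hx0i
  have hev := (hlim.eventually (hWc.isOpen_compl.mem_nhds hx0W)).and (eventually_ge_atTop k)
  obtain ⟨J, hJ⟩ := eventually_atTop.mp hev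
  refine ⟨J, fun j hj => ?_⟩
  obtain ⟨hjW, hjk⟩ := hJ j hj
  have hxj : x j ∈ ⋃ i, Reg i := hcomp ▸ hDk j hjk (hx j)
  obtain ⟨i, hxi⟩ := mem_iUnion.mp hxj
  have hii : i = i₀ := by
    by_contra hne
    exact hjW (mem_iUnion₂.mpr ⟨i, hne, hxi⟩)
  subst hii
  have hRsub : Reg i ⊆ connectedComponentIn (Dseq k)ᶜ (x j) :=
    (hRegC i).2.isPreconnected.subset_connectedComponentIn hxi
      (hcomp ▸ subset_iUnion Reg i)
  have heq : connectedComponentIn (Dseq k)ᶜ (x j) = connectedComponentIn (Dseq k)ᶜ x₀ :=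
    connectedComponentIn_eq (hRsub hx0i)
  exact heq ▸ connectedComponentIn_mono (x j) (hDk j hjk)
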